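/- (Chaundy–Jolliffe) Let {a_n}_{n≥1} be a non-increasing real sequence with a_n ≥ 0 and lim_{n→∞} a_n = 0. Then the sine series ∑_{n=1}^∞ a_n sin(nx) converges uniformly on ℝ (i.e., its partial sums S_n(x) = ∑_{k=1}^n a_k sin(kx) converge uniformly) if and only if lim_{n→∞} n·a_n = 0. -/

import Mathlib

open Filter

private lemma tele_Ioc (g : ℕ → ℝ) (m n : ℕ) (h : m ≤ n) :
    ∑ k ∈ Finset.Ioc m n, (g k - g (k+1)) = g (m+1) - g (n+1) := by
  induction n, h using Nat.le_induction with
  | base => simp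
  | succ n hn ih => rw [Finset.sum_Ioc_succ_top hn, ih]; ring

private lemma dirichlet_bound (x : ℝ) (hx : Real.sin (x/2) ≠ 0) (m n : ℕ) (h : m ≤ n) :
    |∑ k ∈ Finset.Ioc m n, Real.sin (k * x)| ≤ 1 / |Real.sin (x/2)| := by
  set g : ℕ → ℝ := fun k => Real.cos (k * x - x/2) with hg
  have key : ∀ k : ℕ, 2 * Real.sin (x/2) * Real.sin (k * x) = g k - g (k+1) := by
    intro k
    have h1 : g k = Real.cos ((k:ℝ) * x - x/2) := rfl
    have h2 : g (k+1) = Real.cos ((k:ℝ) * x + x/2) := by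
      simp only [hg]; congr 1; push_cast; ring
    rw [h1, h2, Real.cos_sub_cos]
    have e1 : ((k:ℝ) * x - x/2 + ((k:ℝ) * x + x/2)) / 2 = (k:ℝ) * x := by ring
    have e2 : ((k:ℝ) * x - x/2 - ((k:ℝ) * x + x/2)) / 2 = -(x/2) := by ring
    rw [e1, e2, Real.sin_neg]; ring
  have hsum : 2 * Real.sin (x/2) * (∑ k ∈ Finset.Ioc m n, Real.sin (k * x))
      = g (m+1) - g (n+1) := by
    rw [Finset.mul_sum, ← tele_Ioc g m n h]
    exact Finset.sum_congr rfl fun k _ => key k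
  have hs : 0 < |Real.sin (x/2)| := abs_pos.mpr hx
  rw [le_div_iff₀ hs]
  have hb : |g (m+1) - g (n+1)| ≤ 2 := by
    calc |g (m+1) - g (n+1)| ≤ |g (m+1)| + |g (n+1)| := abs_sub _ _
    _ ≤ 1 + 1 := add_le_add (Real.abs_cos_le_one _) (Real.abs_cos_le_one _)
    _ = 2 := by norm_num
  have habs : |2 * Real.sin (x/2) * (∑ k ∈ Finset.Ioc m n, Real.sin (k * x))|
      = 2 * |Real.sin (x/2)| * |∑ k ∈ Finset.Ioc m n, Real.sin (k * x)| := by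
    rw [abs_mul, abs_mul]; norm_num
  rw [hsum] at habs
  nlinarith [abs_nonneg (∑ k ∈ Finset.Ioc m n, Real.sin (k * x))]

private lemma abel_identity (b s : ℕ → ℝ) (m n : ℕ) (h : m ≤ n) :
    ∑ k ∈ Finset.Ioc m n, b k * s k
      = (∑ k ∈ Finset.Ioc m n, (b k - b (k+1)) * (∑ j ∈ Finset.Ioc m k, s j))
        + b (n+1) * (∑ j ∈ Finset.Ioc m n, s j) := by
  induction n, h using Nat.le_induction with
  | base => simp
  | succ n hn ih =>
    rw [Finset.sum_Ioc_succ_top hn (fun k => b k * s k), ih,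
      Finset.sum_Ioc_succ_top hn (fun k => (b k - b (k+1)) * (∑ j ∈ Finset.Ioc m k, s j)),
      Finset.sum_Ioc_succ_top hn s]
    ring

private lemma abel_bound (b s : ℕ → ℝ) (M : ℝ) (m n : ℕ) (h : m ≤ n)
    (hb0 : ∀ k, m < k → 0 ≤ b k) (hbm : ∀ k, m < k → b (k+1) ≤ b k)
    (hD : ∀ i, m ≤ i → i ≤ n → |∑ j ∈ Finset.Ioc m i, s j| ≤ M) :
    |∑ k ∈ Finset.Ioc m n, b k * s k| ≤ b (m+1) * M := by
  have hM : 0 ≤ M := le_trans (abs_nonneg _) (hD m le_rfl h)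
  rw [abel_identity b s m n h]
  have h1 : |∑ k ∈ Finset.Ioc m n, (b k - b (k+1)) * (∑ j ∈ Finset.Ioc m k, s j)|
      ≤ ∑ k ∈ Finset.Ioc m n, (b k - b (k+1)) * M := by
    refine (Finset.abs_sum_le_sum_abs _ _).trans (Finset.sum_le_sum fun k hk => ?_)
    rw [Finset.mem_Ioc] at hk
    rw [abs_mul, abs_of_nonneg (by linarith [hbm k hk.1])]
    exact mul_le_mul_of_nonneg_left (hD k (le_of_lt hk.1) hk.2) (by linarith [hbm k hk.1])
  have h2 : |b (n+1) * (∑ j ∈ Finset.Ioc m n, s j)| ≤ b (n+1) * M := by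
    rw [abs_mul, abs_of_nonneg (hb0 (n+1) (by omega))]
    exact mul_le_mul_of_nonneg_left (hD n h le_rfl) (hb0 (n+1) (by omega))
  have h3 : ∑ k ∈ Finset.Ioc m n, (b k - b (k+1)) * M = (b (m+1) - b (n+1)) * M := by
    rw [← Finset.sum_mul, tele_Ioc b m n h]
  calc |(∑ k ∈ Finset.Ioc m n, (b k - b (k+1)) * (∑ j ∈ Finset.Ioc m k, s j))
        + b (n+1) * (∑ j ∈ Finset.Ioc m n, s j)|
      ≤ |∑ k ∈ Finset.Ioc m n, (b k - b (k+1)) * (∑ j ∈ Finset.Ioc m k, s j)|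
        + |b (n+1) * (∑ j ∈ Finset.Ioc m n, s j)| := abs_add_le _ _
    _ ≤ (b (m+1) - b (n+1)) * M + b (n+1) * M := by rw [← h3]; exact add_le_add h1 h2
    _ = b (m+1) * M := by ring

private lemma tail_arith {e x p aj qr jr : ℝ} (he : 0 < e) (hx : 0 < x) (hp : 0 < p)
    (hq1 : 1 ≤ qr) (hqx : 1/x ≤ qr) (hqj : qr ≤ jr) (h1 : jr * aj ≤ e) (ha1 : 0 ≤ aj) :
    aj * (p / x) ≤ p * e := by
  have hq0 : 0 < qr := by linarith
  have hj0 : 0 < jr := by linarith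
  have h2 : aj ≤ e / jr := by rw [le_div_iff₀ hj0]; linarith [mul_comm jr aj]
  have h3 : e / jr ≤ e / qr := by
    apply div_le_div_of_nonneg_left he.le hq0 hqj
  have h4 : e / qr ≤ e * x := by
    rw [div_le_iff₀ hq0]
    have h5 : 1 ≤ x * qr := by
      have := (div_le_iff₀ hx).mp hqx
      linarith [mul_comm qr x]
    nlinarith
  have h6 : 0 ≤ p / x := by positivity
  calc aj * (p / x) ≤ (e * x) * (p / x) :=
        mul_le_mul_of_nonneg_right (h2.trans (h3.trans h4)) h6
    _ = p * e := by field_simp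

private lemma core_est (a : ℕ → ℝ) (ha : ∀ n : ℕ, 1 ≤ n → 0 ≤ a n)
    (hmono : ∀ n : ℕ, 1 ≤ n → a (n + 1) ≤ a n)
    {ε : ℝ} (hε : 0 < ε) {N : ℕ} (hN : 1 ≤ N) (hsm : ∀ k, N ≤ k → (k:ℝ) * a k ≤ ε)
    {m n : ℕ} (hm : N ≤ m) (hmn : m ≤ n) {x : ℝ} (hx0 : 0 < x) (hxpi : x ≤ Real.pi) :
    |∑ k ∈ Finset.Ioc m n, a k * Real.sin (k * x)| ≤ (1 + 2 * Real.pi) * ε := by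
  have hπ : 0 < Real.pi := Real.pi_pos
  have hεx : 0 ≤ ε * x := by positivity
  -- Jordan: sin (x/2) ≥ x / π > 0
  have hsin : x / Real.pi ≤ Real.sin (x/2) := by
    have h0 := Real.mul_le_sin (x := x/2) (by linarith) (by linarith)
    calc x / Real.pi = 2 / Real.pi * (x/2) := by ring
      _ ≤ Real.sin (x/2) := h0
  have hsinpos : 0 < Real.sin (x/2) := lt_of_lt_of_le (by positivity) hsin
  have hsin' : x ≤ Real.sin (x/2) * Real.pi := (div_le_iff₀ hπ).mp hsin
  have hM : 1 / |Real.sin (x/2)| ≤ Real.pi / x := by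
    rw [abs_of_pos hsinpos, div_le_div_iff₀ hsinpos hx0]
    linarith
  obtain ⟨q, hq1, hqx, hqx'⟩ : ∃ q : ℕ, 1 ≤ q ∧ 1/x ≤ (q:ℝ) ∧ (q:ℝ) < 1/x + 1 :=
    ⟨⌈1/x⌉₊, Nat.one_le_ceil_iff.mpr (by positivity), Nat.le_ceil _,
      Nat.ceil_lt_add_one (by positivity)⟩
  have hqεx : (q:ℝ) * (ε * x) ≤ (1 + Real.pi) * ε := by
    have h1 : (q:ℝ) * (ε * x) ≤ (1/x + 1) * (ε * x) := by
      apply mul_le_mul_of_nonneg_right hqx'.le hεx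
    have h2 : (1/x + 1) * (ε * x) = ε + ε * x := by field_simp
    nlinarith
  -- bound on any block of at most q consecutive "small" terms
  have hsmall : ∀ r : ℕ, m ≤ r → r ≤ m + q →
      |∑ k ∈ Finset.Ioc m r, a k * Real.sin (k * x)| ≤ (1 + Real.pi) * ε := by
    intro r hmr hrq
    have hterm : ∀ k ∈ Finset.Ioc m r, |a k * Real.sin (k * x)| ≤ ε * x := by
      intro k hk
      rw [Finset.mem_Ioc] at hk
      have hk1 : 1 ≤ k := by omega
      have hka : 0 ≤ a k := ha k hk1
      have hsk : |Real.sin ((k:ℝ) * x)| ≤ (k:ℝ) * x := by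
        calc |Real.sin ((k:ℝ) * x)| ≤ |(k:ℝ) * x| := Real.abs_sin_le_abs
          _ = (k:ℝ) * x := abs_of_nonneg (by positivity)
      have hka' := hsm k (by omega)
      calc |a k * Real.sin ((k:ℝ) * x)| = a k * |Real.sin ((k:ℝ) * x)| := by
            rw [abs_mul, abs_of_nonneg hka]
        _ ≤ a k * ((k:ℝ) * x) := by nlinarith
        _ = ((k:ℝ) * a k) * x := by ring
        _ ≤ ε * x := by nlinarith
    have hcard : ((r - m : ℕ) : ℝ) ≤ (q : ℝ) := by
      have : r - m ≤ q := by omega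
      exact_mod_cast this
    calc |∑ k ∈ Finset.Ioc m r, a k * Real.sin (k * x)|
        ≤ ∑ k ∈ Finset.Ioc m r, |a k * Real.sin (k * x)| := Finset.abs_sum_le_sum_abs _ _
      _ ≤ ∑ _k ∈ Finset.Ioc m r, ε * x := Finset.sum_le_sum hterm
      _ = ((r - m : ℕ) : ℝ) * (ε * x) := by rw [Finset.sum_const, Nat.card_Ioc]; simp
      _ ≤ (q : ℝ) * (ε * x) := mul_le_mul_of_nonneg_right hcard hεx
      _ ≤ (1 + Real.pi) * ε := hqεx
  rcases le_or_gt n (m + q) with hcase | hcase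
  · -- all terms small
    calc |∑ k ∈ Finset.Ioc m n, a k * Real.sin (k * x)| ≤ (1 + Real.pi) * ε :=
          hsmall n hmn hcase
      _ ≤ (1 + 2 * Real.pi) * ε := by nlinarith
  · -- split at j := m + q
    obtain ⟨j, hjdef⟩ : ∃ j : ℕ, j = m + q := ⟨m + q, rfl⟩
    have hmj : m ≤ j := by omega
    have hjn : j ≤ n := by omega
    have hsplit : ∑ k ∈ Finset.Ioc m n, a k * Real.sin (k * x)
        = (∑ k ∈ Finset.Ioc m j, a k * Real.sin (k * x))
          + ∑ k ∈ Finset.Ioc j n, a k * Real.sin (k * x) := by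
      rw [← Finset.sum_union, Finset.Ioc_union_Ioc_eq_Ioc hmj hjn]
      simp only [Finset.disjoint_left, Finset.mem_Ioc]
      omega
    have htail : |∑ k ∈ Finset.Ioc j n, a k * Real.sin (k * x)| ≤ Real.pi * ε := by
      have hD : ∀ i, j ≤ i → i ≤ n →
          |∑ p ∈ Finset.Ioc j i, Real.sin (p * x)| ≤ Real.pi / x := fun i hi _ =>
        (dirichlet_bound x (ne_of_gt hsinpos) j i hi).trans hM
      have hab := abel_bound a (fun k => Real.sin (k * x)) (Real.pi / x) j n hjn
        (fun k hk => ha k (by omega)) (fun k hk => hmono k (by omega)) hD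
      refine hab.trans (tail_arith hε hx0 Real.pi_pos
        (by exact_mod_cast hq1 : (1:ℝ) ≤ (q:ℝ)) hqx
        (by exact_mod_cast (by omega : q ≤ j + 1)) (hsm (j+1) (by omega)) (ha _ (by omega)))
    calc |∑ k ∈ Finset.Ioc m n, a k * Real.sin (k * x)|
        ≤ |∑ k ∈ Finset.Ioc m j, a k * Real.sin (k * x)|
          + |∑ k ∈ Finset.Ioc j n, a k * Real.sin (k * x)| := by rw [hsplit]; exact abs_add_le _ _
      _ ≤ (1 + Real.pi) * ε + Real.pi * ε := add_le_add (hsmall j hmj (by omega)) htail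
      _ = (1 + 2 * Real.pi) * ε := by ring

private lemma core_est_all (a : ℕ → ℝ) (ha : ∀ n : ℕ, 1 ≤ n → 0 ≤ a n)
    (hmono : ∀ n : ℕ, 1 ≤ n → a (n + 1) ≤ a n)
    {ε : ℝ} (hε : 0 < ε) {N : ℕ} (hN : 1 ≤ N) (hsm : ∀ k, N ≤ k → (k:ℝ) * a k ≤ ε)
    {m n : ℕ} (hm : N ≤ m) (hmn : m ≤ n) (x : ℝ) :
    |∑ k ∈ Finset.Ioc m n, a k * Real.sin (k * x)| ≤ (1 + 2 * Real.pi) * ε := by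
  have hπ : 0 < Real.pi := Real.pi_pos
  set I : ℤ := ⌊x / (2 * Real.pi)⌋ with hI
  set y : ℝ := x - I * (2 * Real.pi) with hy
  have hy0 : 0 ≤ y := by
    have := Int.floor_le (x / (2 * Real.pi))
    have h2 : (I:ℝ) * (2 * Real.pi) ≤ x := by
      rw [hI]
      calc (⌊x / (2 * Real.pi)⌋ : ℝ) * (2 * Real.pi) ≤ x / (2 * Real.pi) * (2 * Real.pi) := by
            apply mul_le_mul_of_nonneg_right this (by positivity)
        _ = x := by field_simp
    linarith
  have hy2 : y < 2 * Real.pi := by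
    have := Int.lt_floor_add_one (x / (2 * Real.pi))
    have h2 : x < ((I:ℝ) + 1) * (2 * Real.pi) := by
      rw [hI]
      calc x = x / (2 * Real.pi) * (2 * Real.pi) := by field_simp
        _ < ((⌊x / (2 * Real.pi)⌋ : ℝ) + 1) * (2 * Real.pi) := by
            apply mul_lt_mul_of_pos_right this (by positivity)
    nlinarith
  have hEq : ∀ k : ℕ, Real.sin (k * x) = Real.sin (k * y) := by
    intro k
    have h3 : (k:ℝ) * y = (k:ℝ) * x - ((k * I : ℤ):ℝ) * (2 * Real.pi) := by
      rw [hy]; push_cast; ring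
    rw [h3, Real.sin_sub_int_mul_two_pi]
  have hrw : ∑ k ∈ Finset.Ioc m n, a k * Real.sin (k * x)
      = ∑ k ∈ Finset.Ioc m n, a k * Real.sin (k * y) := by
    exact Finset.sum_congr rfl fun k _ => by rw [hEq k]
  rw [hrw]
  rcases eq_or_lt_of_le hy0 with h0 | h0
  · simp only [← h0, mul_zero, Real.sin_zero]
    simp
    positivity
  rcases le_or_gt y Real.pi with h1 | h1
  · exact core_est a ha hmono hε hN hsm hm hmn h0 h1
  · set z : ℝ := 2 * Real.pi - y with hz
    have hz0 : 0 < z := by rw [hz]; linarith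
    have hz1 : z ≤ Real.pi := by rw [hz]; linarith
    have hEq2 : ∀ k : ℕ, Real.sin (k * y) = -Real.sin (k * z) := by
      intro k
      have h3 : (k:ℝ) * y = ((k:ℤ):ℝ) * (2 * Real.pi) - (k:ℝ) * z := by
        rw [hz]; push_cast; ring
      rw [h3, Real.sin_int_mul_two_pi_sub]
    have hrw2 : ∑ k ∈ Finset.Ioc m n, a k * Real.sin (k * y)
        = -∑ k ∈ Finset.Ioc m n, a k * Real.sin (k * z) := by
      rw [← Finset.sum_neg_distrib]
      exact Finset.sum_congr rfl fun k _ => by rw [hEq2 k]; ring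
    rw [hrw2, abs_neg]
    exact core_est a ha hmono hε hN hsm hm hmn hz0 hz1

private lemma a_anti (a : ℕ → ℝ) (hmono : ∀ n : ℕ, 1 ≤ n → a (n + 1) ≤ a n)
    {i j : ℕ} (hi : 1 ≤ i) (hij : i ≤ j) : a j ≤ a i := by
  induction j, hij using Nat.le_induction with
  | base => exact le_refl _
  | succ j hj ih => exact le_trans (hmono j (by omega)) ih

theorem stmt17 (a : ℕ → ℝ) (ha : ∀ n : ℕ, 1 ≤ n → 0 ≤ a n)
    (hmono : ∀ n : ℕ, 1 ≤ n → a (n + 1) ≤ a n)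
    (hlim : Tendsto a atTop (nhds 0)) :
    (∃ f : ℝ → ℝ,
        TendstoUniformly
          (fun (n : ℕ) (x : ℝ) => ∑ k ∈ Finset.Icc 1 n, a k * Real.sin (k * x))
          f atTop) ↔
      Tendsto (fun n : ℕ => (n : ℝ) * a n) atTop (nhds 0) := by
  have hπ : 0 < Real.pi := Real.pi_pos
  set F : ℕ → ℝ → ℝ := fun n x => ∑ k ∈ Finset.Icc 1 n, a k * Real.sin (k * x) with hF
  have hFIoc : ∀ (n : ℕ) (x : ℝ), F n x = ∑ k ∈ Finset.Ioc 0 n, a k * Real.sin (k * x) := by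
    intro n x
    rw [hF, ← Finset.Icc_add_one_left_eq_Ioc]; rfl
  have hdiff : ∀ (p q : ℕ), p ≤ q → ∀ x : ℝ,
      F q x - F p x = ∑ k ∈ Finset.Ioc p q, a k * Real.sin (k * x) := by
    intro p q hpq x
    rw [hFIoc, hFIoc]
    have hsplit : ∑ k ∈ Finset.Ioc 0 q, a k * Real.sin (k * x)
        = (∑ k ∈ Finset.Ioc 0 p, a k * Real.sin (k * x))
          + ∑ k ∈ Finset.Ioc p q, a k * Real.sin (k * x) := by
      rw [← Finset.sum_union, Finset.Ioc_union_Ioc_eq_Ioc (Nat.zero_le p) hpq]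
      simp only [Finset.disjoint_left, Finset.mem_Ioc]
      omega
    rw [hsplit]; ring
  constructor
  · -- uniform convergence → n aₙ → 0
    rintro ⟨f, hf⟩
    have huc : UniformCauchySeqOn F atTop Set.univ :=
      (tendstoUniformlyOn_univ.mpr hf).uniformCauchySeqOn
    rw [Metric.tendsto_atTop]
    intro δ hδ
    have hε : 0 < δ / 7 := by linarith
    obtain ⟨N, hN⟩ := Metric.uniformCauchySeqOn_iff.mp huc (δ / 7) hε
    set N1 : ℕ := max N 1 with hN1
    have key : ∀ p : ℕ, N1 ≤ p → (p:ℝ) * a (2 * p) < 2 * (δ / 7) := by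
      intro p hp
      have hp1 : 1 ≤ p := le_trans (le_max_right N 1) hp
      have hpN : N ≤ p := le_trans (le_max_left N 1) hp
      have hp0 : (0:ℝ) < p := by exact_mod_cast hp1
      set x : ℝ := Real.pi / (4 * p) with hx
      have hxpos : 0 < x := by
        rw [hx]; apply div_pos hπ; positivity
      have hd := hN (2 * p) (by omega) p hpN x (Set.mem_univ x)
      rw [Real.dist_eq, hdiff p (2 * p) (by omega) x] at hd
      have hpx : (p:ℝ) * x = Real.pi / 4 := by
        rw [hx]; field_simp
      have h2px : (2 * (p:ℝ)) * x = Real.pi / 2 := by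
        rw [hx]; field_simp; ring
      have hterm : ∀ k ∈ Finset.Ioc p (2 * p), a (2 * p) * (1/2) ≤ a k * Real.sin (k * x) := by
        intro k hk
        rw [Finset.mem_Ioc] at hk
        have hk1 : (p:ℝ) ≤ (k:ℝ) := by exact_mod_cast hk.1.le
        have hk2 : (k:ℝ) ≤ 2 * (p:ℝ) := by exact_mod_cast hk.2
        have hkx0 : Real.pi / 4 ≤ (k:ℝ) * x := by
          rw [← hpx]; exact mul_le_mul_of_nonneg_right hk1 hxpos.le
        have hkx1 : (k:ℝ) * x ≤ Real.pi / 2 := by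
          rw [← h2px]; exact mul_le_mul_of_nonneg_right hk2 hxpos.le
        have hsin : Real.sin (Real.pi / 4) ≤ Real.sin ((k:ℝ) * x) :=
          Real.strictMonoOn_sin.monotoneOn
            ⟨by linarith, by linarith⟩ ⟨by linarith, by linarith⟩ hkx0
        have hsqrt : (1:ℝ) ≤ Real.sqrt 2 := by
          nlinarith [Real.sq_sqrt (by norm_num : (0:ℝ) ≤ 2), Real.sqrt_nonneg 2]
        have h12 : (1:ℝ)/2 ≤ Real.sin ((k:ℝ) * x) := by
          rw [Real.sin_pi_div_four] at hsin; linarith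
        have hak : a (2 * p) ≤ a k := a_anti a hmono (by omega) hk.2
        have ha2p : 0 ≤ a (2 * p) := ha _ (by omega)
        calc a (2 * p) * (1/2) ≤ a (2 * p) * Real.sin ((k:ℝ) * x) :=
              mul_le_mul_of_nonneg_left h12 ha2p
          _ ≤ a k * Real.sin ((k:ℝ) * x) :=
              mul_le_mul_of_nonneg_right hak (by linarith)
      have hsum : (p:ℝ) * (a (2 * p) * (1/2))
          ≤ ∑ k ∈ Finset.Ioc p (2 * p), a k * Real.sin (k * x) := by
        have hc := Finset.card_nsmul_le_sum (Finset.Ioc p (2 * p))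
          (fun k => a k * Real.sin (k * x)) (a (2 * p) * (1/2)) hterm
        rw [Nat.card_Ioc] at hc
        have : (2 * p - p) = p := by omega
        rw [this, nsmul_eq_mul] at hc
        exact hc
      have hle := le_abs_self (∑ k ∈ Finset.Ioc p (2 * p), a k * Real.sin (k * x))
      nlinarith
    refine ⟨2 * N1 + 2, fun n hn => ?_⟩
    obtain ⟨p, hpge, hcase⟩ : ∃ p : ℕ, N1 ≤ p ∧ (n = 2 * p ∨ n = 2 * p + 1) :=
      ⟨n / 2, by omega, by omega⟩
    have hkey := key p hpge
    have hp1 : 1 ≤ p := le_trans (le_max_right N 1) hpge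
    have hp0 : (1:ℝ) ≤ (p:ℝ) := by exact_mod_cast hp1
    have ha2p : 0 ≤ a (2 * p) := ha _ (by omega)
    rcases hcase with h | h <;> subst h
    · rw [Real.dist_eq, sub_zero,
        abs_of_nonneg (mul_nonneg (by positivity) (ha _ (by omega)))]
      push_cast
      nlinarith
    · rw [Real.dist_eq, sub_zero,
        abs_of_nonneg (mul_nonneg (by positivity) (ha _ (by omega)))]
      have hmn : a (2 * p + 1) ≤ a (2 * p) := hmono (2 * p) (by omega)
      have han : 0 ≤ a (2 * p + 1) := ha _ (by omega)
      push_cast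
      nlinarith
  · -- n aₙ → 0 → uniform convergence
    intro h
    have hcauchy : UniformCauchySeqOn F atTop Set.univ := by
      rw [Metric.uniformCauchySeqOn_iff]
      intro δ hδ
      have hC : (0:ℝ) < 1 + 2 * Real.pi := by linarith
      set ε : ℝ := δ / (2 * (1 + 2 * Real.pi)) with hεdef
      have hεpos : 0 < ε := by rw [hεdef]; positivity
      obtain ⟨N0, hN0⟩ := Metric.tendsto_atTop.mp h ε hεpos
      refine ⟨max N0 1, fun p hp q hq x _ => ?_⟩
      have hsm : ∀ k, max N0 1 ≤ k → (k:ℝ) * a k ≤ ε := by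
        intro k hk
        have h2 := hN0 k (le_trans (le_max_left _ _) hk)
        rw [Real.dist_eq, sub_zero] at h2
        exact le_of_lt (lt_of_abs_lt h2)
      have hN1 : 1 ≤ max N0 1 := le_max_right _ _
      have main : ∀ p q : ℕ, max N0 1 ≤ p → p ≤ q → dist (F p x) (F q x) < δ := by
        intro p q hp hpq
        rw [dist_comm, Real.dist_eq, hdiff p q hpq x]
        calc |∑ k ∈ Finset.Ioc p q, a k * Real.sin (k * x)|
            ≤ (1 + 2 * Real.pi) * ε := core_est_all a ha hmono hεpos hN1 hsm hp hpq x
          _ = δ / 2 := by rw [hεdef]; field_simp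
          _ < δ := by linarith
      rcases le_total p q with h' | h'
      · exact main p q hp h'
      · rw [dist_comm]; exact main q p hq h'
    have hpt : ∀ x : ℝ, ∃ L, Tendsto (fun n => F n x) atTop (nhds L) := by
      intro x
      apply cauchySeq_tendsto_of_complete
      have h2 := Metric.uniformCauchySeqOn_iff.mp hcauchy
      rw [Metric.cauchySeq_iff]
      intro ε hε
      obtain ⟨N, hN⟩ := h2 ε hε
      exact ⟨N, fun m hm n hn => hN m hm n hn x (Set.mem_univ x)⟩
    choose f hfpt using hpt
    exact ⟨f, tendstoUniformlyOn_univ.mp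
      (hcauchy.tendstoUniformlyOn_of_tendsto (fun x _ => hfpt x))⟩
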